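/- There exist unique 𝕂(q)-algebra homomorphisms Δ: U' → U' ⊗ U' and ε: U' → 𝕂(q) satisfying Δ(X^{±1}) = X^{±1} ⊗ X^{±1}, Δ(Y) = (Y - 1) ⊗ X^{-1} + 1 ⊗ Y, Δ(Z) = (Z - 1) ⊗ X^{-1} + 1 ⊗ Z, and ε(X) = ε(Y) = ε(Z) = 1; moreover, under the isomorphism θ: U' → U_q(sl2) given by θ(X^{±1}) = K^{±1}, θ(Y) = K^{-1} + F(q - q^{-1}), θ(Z) = K^{-1} - K^{-1}Eq(q - q^{-1}), these correspond to the standard comultiplication and counit of U_q(sl2), i.e. (θ ⊗ θ) ∘ Δ = Δ_std ∘ θ and ε = ε_std ∘ θ, where Δ_std(E) = E ⊗ 1 + K ⊗ E, Δ_std(F) = F ⊗ K^{-1} + 1 ⊗ F, Δ_std(K^{±1}) = K^{±1} ⊗ K^{±1}, ε_std(E) = ε_std(F) = 0, ε_std(K) = 1. -/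

import Mathlib

open FreeAlgebra
open scoped TensorProduct

noncomputable section

/-- The field `𝕂(q)` of rational functions in the indeterminate `q` over `𝕂`. -/
abbrev Kq (K : Type) [Field K] : Type := RatFunc K

/-- The indeterminate `q` viewed as an element of `𝕂(q)`. -/
def qv (K : Type) [Field K] : Kq K := RatFunc.X

/-- Generators `E, F, K, K⁻¹` for the Chevalley presentation of `U_q(sl₂)`. -/
inductive SGen : Type | E | F | K | Kinv

/-- Generators `X, X⁻¹, Y, Z` for the equitable presentation. -/
inductive TGen : Type | X | Xinv | Y | Z

/-- The defining relations of `U_q(sl₂)` in the Chevalley presentation. -/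
inductive SRel (K : Type) [Field K] :
    FreeAlgebra (Kq K) SGen → FreeAlgebra (Kq K) SGen → Prop
  | r1a : SRel K (ι (Kq K) SGen.K * ι (Kq K) SGen.Kinv) 1
  | r1b : SRel K (ι (Kq K) SGen.Kinv * ι (Kq K) SGen.K) 1
  | r2 : SRel K (ι (Kq K) SGen.K * ι (Kq K) SGen.E * ι (Kq K) SGen.Kinv)
      ((qv K ^ 2) • ι (Kq K) SGen.E)
  | r3 : SRel K (ι (Kq K) SGen.K * ι (Kq K) SGen.F * ι (Kq K) SGen.Kinv)
      ((qv K ^ (-2 : ℤ)) • ι (Kq K) SGen.F)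
  | r4 : SRel K (ι (Kq K) SGen.E * ι (Kq K) SGen.F - ι (Kq K) SGen.F * ι (Kq K) SGen.E)
      ((qv K - (qv K)⁻¹)⁻¹ • (ι (Kq K) SGen.K - ι (Kq K) SGen.Kinv))

/-- The defining relations of the equitable presentation. -/
inductive TRel (K : Type) [Field K] :
    FreeAlgebra (Kq K) TGen → FreeAlgebra (Kq K) TGen → Prop
  | e1a : TRel K (ι (Kq K) TGen.X * ι (Kq K) TGen.Xinv) 1
  | e1b : TRel K (ι (Kq K) TGen.Xinv * ι (Kq K) TGen.X) 1
  | e2 : TRel K ((qv K - (qv K)⁻¹)⁻¹ •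
      (qv K • (ι (Kq K) TGen.X * ι (Kq K) TGen.Y) -
        (qv K)⁻¹ • (ι (Kq K) TGen.Y * ι (Kq K) TGen.X))) 1
  | e3 : TRel K ((qv K - (qv K)⁻¹)⁻¹ •
      (qv K • (ι (Kq K) TGen.Y * ι (Kq K) TGen.Z) -
        (qv K)⁻¹ • (ι (Kq K) TGen.Z * ι (Kq K) TGen.Y))) 1
  | e4 : TRel K ((qv K - (qv K)⁻¹)⁻¹ •
      (qv K • (ι (Kq K) TGen.Z * ι (Kq K) TGen.X) -
        (qv K)⁻¹ • (ι (Kq K) TGen.X * ι (Kq K) TGen.Z))) 1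

/-- `U_q(sl₂)` with the Chevalley presentation. -/
abbrev Usl2 (K : Type) [Field K] := RingQuot (SRel K)

/-- The algebra `U'` with the equitable presentation. -/
abbrev Ueq2 (K : Type) [Field K] := RingQuot (TRel K)

def genE (K : Type) [Field K] : Usl2 K := RingQuot.mkAlgHom (Kq K) (SRel K) (ι (Kq K) SGen.E)
def genF (K : Type) [Field K] : Usl2 K := RingQuot.mkAlgHom (Kq K) (SRel K) (ι (Kq K) SGen.F)
def genK (K : Type) [Field K] : Usl2 K := RingQuot.mkAlgHom (Kq K) (SRel K) (ι (Kq K) SGen.K)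
def genKinv (K : Type) [Field K] : Usl2 K := RingQuot.mkAlgHom (Kq K) (SRel K) (ι (Kq K) SGen.Kinv)

def genX (K : Type) [Field K] : Ueq2 K := RingQuot.mkAlgHom (Kq K) (TRel K) (ι (Kq K) TGen.X)
def genXinv (K : Type) [Field K] : Ueq2 K := RingQuot.mkAlgHom (Kq K) (TRel K) (ι (Kq K) TGen.Xinv)
def genY (K : Type) [Field K] : Ueq2 K := RingQuot.mkAlgHom (Kq K) (TRel K) (ι (Kq K) TGen.Y)
def genZ (K : Type) [Field K] : Ueq2 K := RingQuot.mkAlgHom (Kq K) (TRel K) (ι (Kq K) TGen.Z)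

end
set_option synthInstance.maxHeartbeats 800000
set_option maxHeartbeats 1600000
set_option linter.unnecessarySeqFocus false

open FreeAlgebra TensorProduct
open scoped TensorProduct

noncomputable section AuxGeneric

variable {F : Type} [Field F] {U : Type} [Ring U] [Algebra F U]

lemma gsolve {q : F} (hq : q ≠ 0) {a b c : U}
    (h : q • a - q⁻¹ • b = (q - q⁻¹) • c) :
    b = (q * q) • a - (q * (q - q⁻¹)) • c := by
  have h2 := congrArg (fun t => q • t) h
  simp only [smul_sub, smul_smul] at h2
  rw [mul_inv_cancel₀ hq, one_smul] at h2
  have h3 := sub_eq_iff_eq_add.mp h2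
  rw [h3]; abel

lemma gE1 {x xi : U} (h1 : x * xi = 1) :
    (x ⊗ₜ[F] x) * (xi ⊗ₜ[F] xi) = 1 := by
  rw [Algebra.TensorProduct.tmul_mul_tmul, h1, Algebra.TensorProduct.one_def]

lemma gE2 {q : F} (hq : q ≠ 0) {x xi y : U} (h1 : x * xi = 1) (h2 : xi * x = 1)
    (hxy : q • (x * y) - q⁻¹ • (y * x) = (q - q⁻¹) • (1 : U)) :
    q • ((x ⊗ₜ[F] x) * ((y - 1) ⊗ₜ[F] xi + 1 ⊗ₜ[F] y))
      - q⁻¹ • ((((y - 1) ⊗ₜ[F] xi + 1 ⊗ₜ[F] y)) * (x ⊗ₜ[F] x))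
      = (q - q⁻¹) • (1 : U ⊗[F] U) := by
  have eyx := gsolve hq hxy
  simp only [Algebra.TensorProduct.one_def, mul_add, add_mul,
    Algebra.TensorProduct.tmul_mul_tmul, one_mul, mul_one, mul_sub, sub_mul,
    h1, h2, eyx]
  simp only [TensorProduct.sub_tmul, TensorProduct.tmul_sub, TensorProduct.add_tmul,
    TensorProduct.tmul_add, ← TensorProduct.smul_tmul', TensorProduct.tmul_smul]
  match_scalars <;> field_simp <;> ring

lemma gE4 {q : F} (hq : q ≠ 0) {x xi z : U} (h1 : x * xi = 1) (h2 : xi * x = 1)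
    (hzx : q • (z * x) - q⁻¹ • (x * z) = (q - q⁻¹) • (1 : U)) :
    q • ((((z - 1) ⊗ₜ[F] xi + 1 ⊗ₜ[F] z)) * (x ⊗ₜ[F] x))
      - q⁻¹ • ((x ⊗ₜ[F] x) * ((z - 1) ⊗ₜ[F] xi + 1 ⊗ₜ[F] z))
      = (q - q⁻¹) • (1 : U ⊗[F] U) := by
  have exz := gsolve hq hzx
  simp only [Algebra.TensorProduct.one_def, mul_add, add_mul,
    Algebra.TensorProduct.tmul_mul_tmul, one_mul, mul_one, mul_sub, sub_mul,
    h1, h2, exz]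
  simp only [TensorProduct.sub_tmul, TensorProduct.tmul_sub, TensorProduct.add_tmul,
    TensorProduct.tmul_add, ← TensorProduct.smul_tmul', TensorProduct.tmul_smul]
  match_scalars <;> field_simp <;> ring

lemma gE3 {q : F} (hq : q ≠ 0) {xi y z : U}
    (hyz : q • (y * z) - q⁻¹ • (z * y) = (q - q⁻¹) • (1 : U))
    (hyxi : q • (y * xi) - q⁻¹ • (xi * y) = (q - q⁻¹) • (xi * xi))
    (hxiz : q • (xi * z) - q⁻¹ • (z * xi) = (q - q⁻¹) • (xi * xi)) :
    q • ((((y - 1) ⊗ₜ[F] xi + 1 ⊗ₜ[F] y)) * ((z - 1) ⊗ₜ[F] xi + 1 ⊗ₜ[F] z))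
      - q⁻¹ • ((((z - 1) ⊗ₜ[F] xi + 1 ⊗ₜ[F] z)) * ((y - 1) ⊗ₜ[F] xi + 1 ⊗ₜ[F] y))
      = (q - q⁻¹) • (1 : U ⊗[F] U) := by
  have ezy := gsolve hq hyz
  have exiy := gsolve hq hyxi
  have ezxi := gsolve hq hxiz
  simp only [Algebra.TensorProduct.one_def, mul_add, add_mul,
    Algebra.TensorProduct.tmul_mul_tmul, one_mul, mul_one, mul_sub, sub_mul,
    ezy, exiy, ezxi]
  simp only [TensorProduct.sub_tmul, TensorProduct.tmul_sub, TensorProduct.add_tmul,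
    TensorProduct.tmul_add, ← TensorProduct.smul_tmul', TensorProduct.tmul_smul,
    smul_sub]
  match_scalars <;> field_simp <;> ring

lemma gY {c : F} {ki f : U} :
    ((ki + c • f) - 1) ⊗ₜ[F] ki + 1 ⊗ₜ[F] (ki + c • f)
      = ki ⊗ₜ[F] ki + c • (f ⊗ₜ[F] ki + 1 ⊗ₜ[F] f) := by
  simp only [TensorProduct.sub_tmul, TensorProduct.tmul_sub, TensorProduct.add_tmul,
    TensorProduct.tmul_add, ← TensorProduct.smul_tmul', TensorProduct.tmul_smul]
  match_scalars <;> ring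

lemma gZ {c : F} {kk ki e : U} (h : ki * kk = 1) :
    ((ki - c • (ki * e)) - 1) ⊗ₜ[F] ki + 1 ⊗ₜ[F] (ki - c • (ki * e))
      = ki ⊗ₜ[F] ki - c • ((ki ⊗ₜ[F] ki) * (e ⊗ₜ[F] 1 + kk ⊗ₜ[F] e)) := by
  simp only [mul_add, Algebra.TensorProduct.tmul_mul_tmul, mul_one, h]
  simp only [TensorProduct.sub_tmul, TensorProduct.tmul_sub, TensorProduct.add_tmul,
    TensorProduct.tmul_add, ← TensorProduct.smul_tmul', TensorProduct.tmul_smul,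
    smul_add]
  match_scalars <;> ring

end AuxGeneric

noncomputable section Aux

variable (K : Type) [Field K]

lemma hq0 : qv K ≠ 0 := RatFunc.X_ne_zero

lemma hs0 : qv K - (qv K)⁻¹ ≠ 0 := by
  intro h
  have h2 : qv K * qv K = 1 := by
    have := sub_eq_zero.mp h
    field_simp [hq0 K] at this
    rw [← sq]; exact this
  have h3 : (RatFunc.X : RatFunc K) * RatFunc.X ≠ 1 := by
    intro hc
    have := congrArg (RatFunc.intDegree) hc
    simp [RatFunc.intDegree_mul (RatFunc.X_ne_zero) (RatFunc.X_ne_zero)] at this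
  exact h3 h2

lemma lXXi : genX K * genXinv K = 1 := by
  have := RingQuot.mkAlgHom_rel (Kq K) (TRel.e1a (K := K))
  simpa [genX, genXinv, map_mul] using this

lemma lXiX : genXinv K * genX K = 1 := by
  have := RingQuot.mkAlgHom_rel (Kq K) (TRel.e1b (K := K))
  simpa [genX, genXinv, map_mul] using this

lemma lXY : qv K • (genX K * genY K) - (qv K)⁻¹ • (genY K * genX K)
    = (qv K - (qv K)⁻¹) • 1 := by
  have h := RingQuot.mkAlgHom_rel (Kq K) (TRel.e2 (K := K))
  simp only [map_smul, map_sub, map_mul, map_one] at h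
  have := congrArg (fun t => (qv K - (qv K)⁻¹) • t) h
  simpa [smul_smul, mul_inv_cancel₀ (hs0 K), genX, genY] using this

lemma lYZ : qv K • (genY K * genZ K) - (qv K)⁻¹ • (genZ K * genY K)
    = (qv K - (qv K)⁻¹) • 1 := by
  have h := RingQuot.mkAlgHom_rel (Kq K) (TRel.e3 (K := K))
  simp only [map_smul, map_sub, map_mul, map_one] at h
  have := congrArg (fun t => (qv K - (qv K)⁻¹) • t) h
  simpa [smul_smul, mul_inv_cancel₀ (hs0 K), genY, genZ] using this

lemma lZX : qv K • (genZ K * genX K) - (qv K)⁻¹ • (genX K * genZ K)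
    = (qv K - (qv K)⁻¹) • 1 := by
  have h := RingQuot.mkAlgHom_rel (Kq K) (TRel.e4 (K := K))
  simp only [map_smul, map_sub, map_mul, map_one] at h
  have := congrArg (fun t => (qv K - (qv K)⁻¹) • t) h
  simpa [smul_smul, mul_inv_cancel₀ (hs0 K), genZ, genX] using this

lemma lYXi : qv K • (genY K * genXinv K) - (qv K)⁻¹ • (genXinv K * genY K)
    = (qv K - (qv K)⁻¹) • (genXinv K * genXinv K) := by
  have h := congrArg (fun t => genXinv K * t * genXinv K) (lXY K)
  simp only [mul_sub, sub_mul, mul_smul_comm, smul_mul_assoc, mul_one] at h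
  have A1 : genXinv K * (genX K * genY K) * genXinv K = genY K * genXinv K := by
    rw [← mul_assoc, lXiX, one_mul]
  have A2 : genXinv K * (genY K * genX K) * genXinv K = genXinv K * genY K := by
    rw [mul_assoc, mul_assoc, lXXi, mul_one]
  rw [A1, A2] at h
  exact h

lemma lXiZ : qv K • (genXinv K * genZ K) - (qv K)⁻¹ • (genZ K * genXinv K)
    = (qv K - (qv K)⁻¹) • (genXinv K * genXinv K) := by
  have h := congrArg (fun t => genXinv K * t * genXinv K) (lZX K)
  simp only [mul_sub, sub_mul, mul_smul_comm, smul_mul_assoc, mul_one] at h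
  have A1 : genXinv K * (genZ K * genX K) * genXinv K = genXinv K * genZ K := by
    rw [mul_assoc, mul_assoc, lXXi, mul_one]
  have A2 : genXinv K * (genX K * genZ K) * genXinv K = genZ K * genXinv K := by
    rw [← mul_assoc, lXiX, one_mul]
  rw [A1, A2] at h
  exact h

lemma sKKi : genK K * genKinv K = 1 := by
  have := RingQuot.mkAlgHom_rel (Kq K) (SRel.r1a (K := K))
  simpa [genK, genKinv, map_mul] using this

lemma sKiK : genKinv K * genK K = 1 := by
  have := RingQuot.mkAlgHom_rel (Kq K) (SRel.r1b (K := K))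
  simpa [genK, genKinv, map_mul] using this

/-- images of the generators under the comultiplication -/
def dGen : TGen → Ueq2 K ⊗[Kq K] Ueq2 K
  | .X => genX K ⊗ₜ[Kq K] genX K
  | .Xinv => genXinv K ⊗ₜ[Kq K] genXinv K
  | .Y => (genY K - 1) ⊗ₜ[Kq K] genXinv K + 1 ⊗ₜ[Kq K] genY K
  | .Z => (genZ K - 1) ⊗ₜ[Kq K] genXinv K + 1 ⊗ₜ[Kq K] genZ K

def dFree : FreeAlgebra (Kq K) TGen →ₐ[Kq K] Ueq2 K ⊗[Kq K] Ueq2 K :=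
  FreeAlgebra.lift (Kq K) (dGen K)

lemma dRel : ∀ ⦃a b⦄, TRel K a b → dFree K a = dFree K b := by
  intro a b h
  induction h with
  | e1a =>
    simp only [dFree, map_mul, map_one, FreeAlgebra.lift_ι_apply, dGen]
    exact gE1 (lXXi K)
  | e1b =>
    simp only [dFree, map_mul, map_one, FreeAlgebra.lift_ι_apply, dGen]
    exact gE1 (lXiX K)
  | e2 =>
    simp only [dFree, map_smul, map_sub, map_mul, map_one, FreeAlgebra.lift_ι_apply, dGen]
    rw [gE2 (hq0 K) (lXXi K) (lXiX K) (lXY K), smul_smul,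
      inv_mul_cancel₀ (hs0 K), one_smul]
  | e3 =>
    simp only [dFree, map_smul, map_sub, map_mul, map_one, FreeAlgebra.lift_ι_apply, dGen]
    rw [gE3 (hq0 K) (lYZ K) (lYXi K) (lXiZ K), smul_smul,
      inv_mul_cancel₀ (hs0 K), one_smul]
  | e4 =>
    simp only [dFree, map_smul, map_sub, map_mul, map_one, FreeAlgebra.lift_ι_apply, dGen]
    rw [gE4 (hq0 K) (lXXi K) (lXiX K) (lZX K), smul_smul,
      inv_mul_cancel₀ (hs0 K), one_smul]

def ΔU : Ueq2 K →ₐ[Kq K] Ueq2 K ⊗[Kq K] Ueq2 K :=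
  RingQuot.liftAlgHom (Kq K) ⟨dFree K, dRel K⟩

lemma ΔU_gen (t : TGen) :
    ΔU K (RingQuot.mkAlgHom (Kq K) (TRel K) (ι (Kq K) t)) = dGen K t := by
  rw [ΔU, RingQuot.liftAlgHom_mkAlgHom_apply, dFree, FreeAlgebra.lift_ι_apply]

def eFree : FreeAlgebra (Kq K) TGen →ₐ[Kq K] Kq K :=
  FreeAlgebra.lift (Kq K) (fun _ => (1 : Kq K))

lemma eRel : ∀ ⦃a b⦄, TRel K a b → eFree K a = eFree K b := by
  intro a b h
  induction h with
  | e1a => simp [eFree]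
  | e1b => simp [eFree]
  | e2 => simp [eFree, smul_eq_mul, inv_mul_cancel₀ (hs0 K)]
  | e3 => simp [eFree, smul_eq_mul, inv_mul_cancel₀ (hs0 K)]
  | e4 => simp [eFree, smul_eq_mul, inv_mul_cancel₀ (hs0 K)]

def εU : Ueq2 K →ₐ[Kq K] Kq K :=
  RingQuot.liftAlgHom (Kq K) ⟨eFree K, eRel K⟩

lemma εU_gen (t : TGen) :
    εU K (RingQuot.mkAlgHom (Kq K) (TRel K) (ι (Kq K) t)) = 1 := by
  rw [εU, RingQuot.liftAlgHom_mkAlgHom_apply, eFree, FreeAlgebra.lift_ι_apply]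

lemma UeqHomExt {A : Type} [Semiring A] [Algebra (Kq K) A]
    {f g : Ueq2 K →ₐ[Kq K] A}
    (hX : f (genX K) = g (genX K)) (hXi : f (genXinv K) = g (genXinv K))
    (hY : f (genY K) = g (genY K)) (hZ : f (genZ K) = g (genZ K)) : f = g := by
  apply RingQuot.ringQuot_ext'
  apply FreeAlgebra.hom_ext
  funext t
  cases t with
  | X => simpa [genX] using hX
  | Xinv => simpa [genXinv] using hXi
  | Y => simpa [genY] using hY
  | Z => simpa [genZ] using hZ

end Aux

/-- Existence and uniqueness of the comultiplication `Δ` and counit `ε`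
of `U'` in terms of the equitable generators, and their correspondence under the
isomorphism `θ : U' → U_q(sl₂)` with the standard comultiplication and counit. -/
theorem equitable_comul_counit_sl2 (K : Type) [Field K] :
    (∃! Δ : Ueq2 K →ₐ[Kq K] (Ueq2 K ⊗[Kq K] Ueq2 K),
        Δ (genX K) = genX K ⊗ₜ[Kq K] genX K ∧
        Δ (genXinv K) = genXinv K ⊗ₜ[Kq K] genXinv K ∧
        Δ (genY K) = (genY K - 1) ⊗ₜ[Kq K] genXinv K + 1 ⊗ₜ[Kq K] genY K ∧
        Δ (genZ K) = (genZ K - 1) ⊗ₜ[Kq K] genXinv K + 1 ⊗ₜ[Kq K] genZ K) ∧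
    (∃! ε : Ueq2 K →ₐ[Kq K] Kq K,
        ε (genX K) = 1 ∧ ε (genY K) = 1 ∧ ε (genZ K) = 1) ∧
    (∀ (Δ : Ueq2 K →ₐ[Kq K] (Ueq2 K ⊗[Kq K] Ueq2 K)) (ε : Ueq2 K →ₐ[Kq K] Kq K)
        (θ : Ueq2 K ≃ₐ[Kq K] Usl2 K)
        (Δstd : Usl2 K →ₐ[Kq K] (Usl2 K ⊗[Kq K] Usl2 K)) (εstd : Usl2 K →ₐ[Kq K] Kq K),
      (Δ (genX K) = genX K ⊗ₜ[Kq K] genX K ∧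
        Δ (genXinv K) = genXinv K ⊗ₜ[Kq K] genXinv K ∧
        Δ (genY K) = (genY K - 1) ⊗ₜ[Kq K] genXinv K + 1 ⊗ₜ[Kq K] genY K ∧
        Δ (genZ K) = (genZ K - 1) ⊗ₜ[Kq K] genXinv K + 1 ⊗ₜ[Kq K] genZ K) →
      (ε (genX K) = 1 ∧ ε (genY K) = 1 ∧ ε (genZ K) = 1) →
      (θ (genX K) = genK K ∧ θ (genXinv K) = genKinv K ∧
        θ (genY K) = genKinv K + (qv K - (qv K)⁻¹) • genF K ∧
        θ (genZ K) = genKinv K - (qv K * (qv K - (qv K)⁻¹)) • (genKinv K * genE K)) →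
      (Δstd (genE K) = genE K ⊗ₜ[Kq K] 1 + genK K ⊗ₜ[Kq K] genE K ∧
        Δstd (genF K) = genF K ⊗ₜ[Kq K] genKinv K + 1 ⊗ₜ[Kq K] genF K ∧
        Δstd (genK K) = genK K ⊗ₜ[Kq K] genK K ∧
        Δstd (genKinv K) = genKinv K ⊗ₜ[Kq K] genKinv K) →
      (εstd (genE K) = 0 ∧ εstd (genF K) = 0 ∧ εstd (genK K) = 1) →
      (Algebra.TensorProduct.map θ.toAlgHom θ.toAlgHom).comp Δ = Δstd.comp θ.toAlgHom ∧
        ε = εstd.comp θ.toAlgHom) := by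
  obtain ⟨hX, hXi, hY, hZ⟩ :
      ΔU K (genX K) = genX K ⊗ₜ[Kq K] genX K ∧
      ΔU K (genXinv K) = genXinv K ⊗ₜ[Kq K] genXinv K ∧
      ΔU K (genY K) = (genY K - 1) ⊗ₜ[Kq K] genXinv K + 1 ⊗ₜ[Kq K] genY K ∧
      ΔU K (genZ K) = (genZ K - 1) ⊗ₜ[Kq K] genXinv K + 1 ⊗ₜ[Kq K] genZ K := by
    refine ⟨?_, ?_, ?_, ?_⟩ <;>
      simpa [genX, genXinv, genY, genZ, dGen] using ΔU_gen K _
  refine ⟨⟨ΔU K, ⟨hX, hXi, hY, hZ⟩, ?_⟩, ⟨εU K, ?_, ?_⟩, ?_⟩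
  · rintro Δ' ⟨h1, h2, h3, h4⟩
    exact UeqHomExt K (h1.trans hX.symm) (h2.trans hXi.symm)
      (h3.trans hY.symm) (h4.trans hZ.symm)
  · refine ⟨?_, ?_, ?_⟩ <;> simpa [genX, genY, genZ] using εU_gen K _
  · rintro ε' ⟨h1, h2, h3⟩
    have hXi' : ε' (genXinv K) = 1 := by
      have := congrArg ε' (lXiX K)
      rw [map_mul, map_one, h1, mul_one] at this
      exact this
    have hXi0 : εU K (genXinv K) = 1 := by simpa [genXinv] using εU_gen K TGen.Xinv
    refine UeqHomExt K ?_ ?_ ?_ ?_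
    · rw [h1]; simpa [genX] using (εU_gen K TGen.X).symm
    · rw [hXi', hXi0]
    · rw [h2]; simpa [genY] using (εU_gen K TGen.Y).symm
    · rw [h3]; simpa [genZ] using (εU_gen K TGen.Z).symm
  · rintro Δ' ε' θ Δstd εstd ⟨d1, d2, d3, d4⟩ ⟨c1, c2, c3⟩ ⟨t1, t2, t3, t4⟩
      ⟨s1, s2, s3, s4⟩ ⟨u1, u2, u3⟩
    have hKiK := sKiK K
    have hKKi := sKKi K
    have u4 : εstd (genKinv K) = 1 := by
      have := congrArg εstd hKKi
      rw [map_mul, map_one, u3, one_mul] at this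
      exact this
    constructor
    · refine UeqHomExt K ?_ ?_ ?_ ?_
      · simp only [AlgHom.comp_apply, AlgEquiv.toAlgHom_eq_coe, AlgEquiv.coe_toAlgHom, AlgHom.coe_coe, d1, t1,
          Algebra.TensorProduct.map_tmul, s3]
      · simp only [AlgHom.comp_apply, AlgEquiv.toAlgHom_eq_coe, AlgEquiv.coe_toAlgHom, AlgHom.coe_coe, d2, t2,
          Algebra.TensorProduct.map_tmul, s4]
      · simp only [AlgHom.comp_apply, AlgEquiv.toAlgHom_eq_coe, AlgEquiv.coe_toAlgHom, AlgHom.coe_coe, d3, t3,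
          map_add, Algebra.TensorProduct.map_tmul, map_sub, map_one, map_smul, t2, s1, s2,
          s3, s4]
        exact gY
      · simp only [AlgHom.comp_apply, AlgEquiv.toAlgHom_eq_coe, AlgEquiv.coe_toAlgHom, AlgHom.coe_coe, d4, t4,
          map_add, Algebra.TensorProduct.map_tmul, map_sub, map_one, map_smul, map_mul,
          t2, s1, s2, s3, s4]
        exact gZ hKiK
    · refine UeqHomExt K ?_ ?_ ?_ ?_
      · simp only [AlgHom.comp_apply, AlgEquiv.toAlgHom_eq_coe, AlgEquiv.coe_toAlgHom, AlgHom.coe_coe, c1, t1, u3]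
      · have : ε' (genXinv K) = 1 := by
          have := congrArg ε' (lXiX K)
          rw [map_mul, map_one, c1, mul_one] at this
          exact this
        simp only [AlgHom.comp_apply, AlgEquiv.toAlgHom_eq_coe, AlgEquiv.coe_toAlgHom, AlgHom.coe_coe, this, t2, u4]
      · simp only [AlgHom.comp_apply, AlgEquiv.toAlgHom_eq_coe, AlgEquiv.coe_toAlgHom, AlgHom.coe_coe, c2, t3,
          map_add, map_smul, u2, u4, smul_eq_mul, mul_zero, add_zero]
      · simp only [AlgHom.comp_apply, AlgEquiv.toAlgHom_eq_coe, AlgEquiv.coe_toAlgHom, AlgHom.coe_coe, c3, t4,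
          map_sub, map_smul, map_mul, u1, u4, smul_eq_mul, mul_zero, sub_zero]
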